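/- Let q be an even prime power and F = GF(q). Let W be the 4-dimensional subspace of quadratic forms over F spanned by X0X1, X0X2, X1^2 and X2^2 (the web of conics associated with the line-orbit o_{8,3}). Then among the conics of W there are exactly q+1 double lines, exactly q^2+q pairs of real lines, no pairs of imaginary lines, and exactly q^3−q nonsingular conics. -/

import Mathlib

open Matrix

namespace Conics

/-- Coefficient vector (a0,...,a5) of the product of two linear forms
`(b0*X0+b1*X1+b2*X2)*(c0*X0+c1*X1+c2*X2)`, where the quadratic form with
coefficient vector `a` is `a0*X0^2 + a1*X0*X1 + a2*X0*X2 + a3*X1^2 + a4*X1*X2 + a5*X2^2`. -/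
def mulLin {F : Type} [Field F] (b c : Fin 3 → F) : Fin 6 → F :=
  ![b 0 * c 0, b 0 * c 1 + b 1 * c 0, b 0 * c 2 + b 2 * c 0,
    b 1 * c 1, b 1 * c 2 + b 2 * c 1, b 2 * c 2]

/-- The discriminant of the quadratic form with coefficient vector `a`. -/
def disc {F : Type} [Field F] (a : Fin 6 → F) : F :=
  4 * a 0 * a 3 * a 5 + a 1 * a 2 * a 4 - a 0 * a 4 ^ 2 - a 3 * a 2 ^ 2 - a 5 * a 1 ^ 2

/-- `f_a` is a double line: `f_a = c * l^2` for a nonzero scalar `c` and nonzero linear form `l`. -/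
def IsDoubleLine {F : Type} [Field F] (a : Fin 6 → F) : Prop :=
  ∃ (c : F) (l : Fin 3 → F), c ≠ 0 ∧ l ≠ 0 ∧ a = c • mulLin l l

/-- `f_a` is a pair of (distinct) real lines: `f_a = l1 * l2` with neither linear form a scalar
multiple of the other. -/
def IsRealPair {F : Type} [Field F] (a : Fin 6 → F) : Prop :=
  ∃ l1 l2 : Fin 3 → F, (¬ ∃ t : F, l2 = t • l1) ∧ (¬ ∃ t : F, l1 = t • l2) ∧ a = mulLin l1 l2

/-- `f_a` is a pair of conjugate imaginary lines: singular, but not a product of two linear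
forms over `F`. -/
def IsImagPair {F : Type} [Field F] (a : Fin 6 → F) : Prop :=
  disc a = 0 ∧ ¬ ∃ l1 l2 : Fin 3 → F, a = mulLin l1 l2

/-- `f_a` is a nonsingular conic. -/
def IsNonsingular {F : Type} [Field F] (a : Fin 6 → F) : Prop :=
  disc a ≠ 0

/-- The number of conics of a given type `T` in a linear system `W` (a subspace of the space of
quadratic forms, identified with `F^6`): the number of 1-dimensional subspaces `⟨a⟩` of `W`,
`a ≠ 0`, such that `f_a` has type `T`. -/
noncomputable def numConics {F : Type} [Field F] (W : Submodule F (Fin 6 → F))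
    (T : (Fin 6 → F) → Prop) : ℕ :=
  Set.ncard {P : Submodule F (Fin 6 → F) |
    ∃ a : Fin 6 → F, a ≠ 0 ∧ a ∈ W ∧ T a ∧ P = Submodule.span F {a}}

/-- The symmetric 3×3 matrix associated with a point `y` of `PG(5,q)`. -/
def M {F : Type} [Field F] (y : Fin 6 → F) : Matrix (Fin 3) (Fin 3) F :=
  !![y 0, y 1, y 2; y 1, y 3, y 4; y 2, y 4, y 5]

/-- The pairing `B(a,y) = a0*y0 + ... + a5*y5`. -/
def Bform {F : Type} [Field F] (a y : Fin 6 → F) : F :=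
  a 0 * y 0 + a 1 * y 1 + a 2 * y 2 + a 3 * y 3 + a 4 * y 4 + a 5 * y 5

/-- The squab of conics associated with a (nonzero) point `y`: the hyperplane
`{a : B(a,y) = 0}` of the space of quadratic forms. -/
def squab {F : Type} [Field F] (y : Fin 6 → F) : Submodule F (Fin 6 → F) where
  carrier := {a | Bform a y = 0}
  add_mem' := by
    intro a b ha hb
    simp only [Set.mem_setOf_eq, Bform, Pi.add_apply] at *
    linear_combination ha + hb
  zero_mem' := by simp [Bform]
  smul_mem' := by
    intro c a ha
    simp only [Set.mem_setOf_eq, Bform, Pi.smul_apply, smul_eq_mul] at *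
    linear_combination c * ha

set_option linter.unusedSectionVars false

section Helpers
variable {F : Type} [Field F]

@[simp] lemma c6_0 (x0 x1 x2 x3 x4 x5 : F) : ![x0,x1,x2,x3,x4,x5] 0 = x0 := rfl
@[simp] lemma c6_1 (x0 x1 x2 x3 x4 x5 : F) : ![x0,x1,x2,x3,x4,x5] 1 = x1 := rfl
@[simp] lemma c6_2 (x0 x1 x2 x3 x4 x5 : F) : ![x0,x1,x2,x3,x4,x5] 2 = x2 := rfl
@[simp] lemma c6_3 (x0 x1 x2 x3 x4 x5 : F) : ![x0,x1,x2,x3,x4,x5] 3 = x3 := rfl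
@[simp] lemma c6_4 (x0 x1 x2 x3 x4 x5 : F) : ![x0,x1,x2,x3,x4,x5] 4 = x4 := rfl
@[simp] lemma c6_5 (x0 x1 x2 x3 x4 x5 : F) : ![x0,x1,x2,x3,x4,x5] 5 = x5 := rfl
@[simp] lemma c3_0 (x0 x1 x2 : F) : ![x0,x1,x2] 0 = x0 := rfl
@[simp] lemma c3_1 (x0 x1 x2 : F) : ![x0,x1,x2] 1 = x1 := rfl
@[simp] lemma c3_2 (x0 x1 x2 : F) : ![x0,x1,x2] 2 = x2 := rfl

@[simp] lemma mulLin_0 (b c : Fin 3 → F) : mulLin b c 0 = b 0 * c 0 := rfl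
@[simp] lemma mulLin_1 (b c : Fin 3 → F) : mulLin b c 1 = b 0 * c 1 + b 1 * c 0 := rfl
@[simp] lemma mulLin_2 (b c : Fin 3 → F) : mulLin b c 2 = b 0 * c 2 + b 2 * c 0 := rfl
@[simp] lemma mulLin_3 (b c : Fin 3 → F) : mulLin b c 3 = b 1 * c 1 := rfl
@[simp] lemma mulLin_4 (b c : Fin 3 → F) : mulLin b c 4 = b 1 * c 2 + b 2 * c 1 := rfl
@[simp] lemma mulLin_5 (b c : Fin 3 → F) : mulLin b c 5 = b 2 * c 2 := rfl

lemma two_eq_zero [Fintype F] (heven : Even (Fintype.card F)) : (2 : F) = 0 := by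
  have hp : CharP F (ringChar F) := ringChar.charP F
  obtain ⟨n, hprime, hcard⟩ := FiniteField.card F (ringChar F)
  have h2 : 2 ∣ ringChar F ^ (n : ℕ) := hcard ▸ heven.two_dvd
  have h2p : 2 ∣ ringChar F := Nat.Prime.dvd_of_dvd_pow Nat.prime_two h2
  have hpe : ringChar F = 2 := ((Nat.prime_dvd_prime_iff_eq Nat.prime_two hprime).mp h2p).symm
  have := CharP.cast_eq_zero F (ringChar F)
  rw [hpe] at this
  exact_mod_cast this

lemma sq_surj [Fintype F] (h2 : (2:F) = 0) (t : F) : ∃ s : F, s * s = t := by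
  have hinj : Function.Injective (fun x : F => x * x) := by
    intro x y h
    simp only at h
    have hz : (x - y) * (x - y) = 0 := by linear_combination h + (y*y - x*y) * h2
    exact sub_eq_zero.mp (mul_self_eq_zero.mp hz)
  exact Finite.injective_iff_surjective.mp hinj t

def Wc (F : Type) [Field F] : Submodule F (Fin 6 → F) where
  carrier := {a | a 0 = 0 ∧ a 4 = 0}
  add_mem' := by rintro a b ⟨ha0, ha4⟩ ⟨hb0, hb4⟩; exact ⟨by simp [ha0, hb0], by simp [ha4, hb4]⟩
  zero_mem' := ⟨rfl, rfl⟩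
  smul_mem' := by rintro c a ⟨h0, h4⟩; exact ⟨by simp [h0], by simp [h4]⟩

lemma span_eq_Wc : Submodule.span F ({![0, 1, 0, 0, 0, 0], ![0, 0, 1, 0, 0, 0],
      ![0, 0, 0, 1, 0, 0], ![0, 0, 0, 0, 0, 1]} : Set (Fin 6 → F)) = Wc F := by
  apply le_antisymm
  · rw [Submodule.span_le]
    rintro x hx
    simp only [Set.mem_insert_iff, Set.mem_singleton_iff] at hx
    rcases hx with rfl | rfl | rfl | rfl <;> exact ⟨rfl, rfl⟩
  · rintro a ⟨h0, h4⟩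
    have ha : a = a 1 • ![0, 1, 0, 0, 0, 0] + a 2 • ![0, 0, 1, 0, 0, 0]
        + a 3 • ![0, 0, 0, 1, 0, 0] + a 5 • ![0, 0, 0, 0, 0, 1] := by
      funext i; fin_cases i <;> simp [h0, h4]
    rw [ha]
    refine add_mem (add_mem (add_mem ?_ ?_) ?_) ?_ <;>
      exact Submodule.smul_mem _ _ (Submodule.subset_span (by simp))

lemma span_eq_span {a b : Fin 6 → F} {s : F} (hs : s ≠ 0) (h : a = s • b) :
    Submodule.span F {a} = Submodule.span F {b} := by
  rw [h]; exact Submodule.span_singleton_smul_eq (IsUnit.mk0 s hs) b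

lemma exists_smul_of_span_eq {a b : Fin 6 → F}
    (h : Submodule.span F {a} = Submodule.span F {b}) : ∃ t : F, a = t • b := by
  have : a ∈ Submodule.span F {b} := h ▸ Submodule.mem_span_singleton_self a
  obtain ⟨t, ht⟩ := Submodule.mem_span_singleton.mp this
  exact ⟨t, ht.symm⟩

lemma ncard_eq {P : Type} (r : P → Fin 6 → F) (S : Set (Submodule F (Fin 6 → F)))
    (hS : S = Set.range (fun p => Submodule.span F {r p}))
    (hinj : Function.Injective (fun p => Submodule.span F {r p})) :
    S.ncard = Nat.card P := by
  rw [hS, ← Set.image_univ, Set.ncard_image_of_injective _ hinj, Set.ncard_univ]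

lemma disc_mulLin (b c : Fin 3 → F) : disc (mulLin b c) = 0 := by
  simp only [disc, mulLin_0, mulLin_1, mulLin_2, mulLin_3, mulLin_4, mulLin_5]
  ring

end Helpers

section Reps
variable {F : Type} [Field F]

def rDL (F : Type) [Field F] : Option F → Fin 6 → F
  | some t => ![0,0,0,1,0,t]
  | none => ![0,0,0,0,0,1]

def rRP (F : Type) [Field F] : (F × F) ⊕ F → Fin 6 → F
  | .inl (x, y) => ![0,1,x,y,0,x^2*y]
  | .inr z => ![0,0,1,0,0,z]

def rNS (F : Type) [Field F] : (F × F × Fˣ) ⊕ (Fˣ × F) → Fin 6 → F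
  | .inl (x, y, u) => ![0,1,x,y,0,x^2*y + (u:F)]
  | .inr (u, z) => ![0,0,1,(u:F),0,z]

end Reps

section Sets
variable {F : Type} [Field F] [Fintype F]

lemma DL_set (h2 : (2:F) = 0) :
    {P : Submodule F (Fin 6 → F) |
      ∃ a : Fin 6 → F, a ≠ 0 ∧ a ∈ Wc F ∧ IsDoubleLine a ∧ P = Submodule.span F {a}}
      = Set.range (fun p => Submodule.span F {rDL F p}) := by
  ext P
  simp only [Set.mem_setOf_eq, Set.mem_range]
  constructor
  · rintro ⟨a, hne, ⟨h0, h4⟩, ⟨c, l, hc, hl, ha⟩, rfl⟩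
    have hl0 : l 0 = 0 := by
      have h := h0
      rw [ha] at h
      simp only [Pi.smul_apply, smul_eq_mul, mulLin_0] at h
      rcases mul_eq_zero.mp h with h | h
      · exact absurd h hc
      · exact mul_self_eq_zero.mp h
    have e1 : a 1 = 0 := by rw [ha]; simp [hl0]
    have e2 : a 2 = 0 := by rw [ha]; simp [hl0]
    by_cases h3 : a 3 = 0
    · have h5 : a 5 ≠ 0 := by
        intro h5
        apply hne
        funext i; fin_cases i <;> simp [h0, e1, e2, h3, h4, h5]
      refine ⟨none, ?_⟩
      have heq : a = a 5 • rDL F none := by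
        funext i; fin_cases i <;> simp [rDL, h0, e1, e2, h3, h4]
      exact (span_eq_span h5 heq).symm
    · refine ⟨some (a 5 / a 3), ?_⟩
      have heq : a = a 3 • rDL F (some (a 5 / a 3)) := by
        funext i
        fin_cases i <;> simp [rDL, h0, e1, e2, h4]
        field_simp
      exact (span_eq_span h3 heq).symm
  · rintro ⟨p, rfl⟩
    match p with
    | some t =>
      obtain ⟨s, hs⟩ := sq_surj h2 t
      refine ⟨![0,0,0,1,0,t], ?_, ⟨rfl, rfl⟩, ⟨1, ![0,1,s], one_ne_zero, ?_, ?_⟩, rfl⟩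
      · intro h; exact one_ne_zero (α := F) (by simpa using congrFun h 3)
      · intro h; exact one_ne_zero (α := F) (by simpa using congrFun h 1)
      · funext i
        fin_cases i
        · show (0:F) = 1 * (0 * 0); ring
        · show (0:F) = 1 * (0 * 1 + 1 * 0); ring
        · show (0:F) = 1 * (0 * s + s * 0); ring
        · show (1:F) = 1 * (1 * 1); ring
        · show (0:F) = 1 * (1 * s + s * 1); linear_combination (-s) * h2
        · show t = 1 * (s * s); linear_combination -hs
    | none =>
      refine ⟨![0,0,0,0,0,1], ?_, ⟨rfl, rfl⟩, ⟨1, ![0,0,1], one_ne_zero, ?_, ?_⟩, rfl⟩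
      · intro h; exact one_ne_zero (α := F) (by simpa using congrFun h 5)
      · intro h; exact one_ne_zero (α := F) (by simpa using congrFun h 2)
      · funext i
        fin_cases i
        · show (0:F) = 1 * (0 * 0); ring
        · show (0:F) = 1 * (0 * 0 + 0 * 0); ring
        · show (0:F) = 1 * (0 * 1 + 1 * 0); ring
        · show (0:F) = 1 * (0 * 0); ring
        · show (0:F) = 1 * (0 * 1 + 1 * 0); ring
        · show (1:F) = 1 * (1 * 1); ring

lemma DL_inj : Function.Injective (fun p => Submodule.span F {rDL F p}) := by
  intro p q h
  obtain ⟨t, ht⟩ := exists_smul_of_span_eq h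
  match p, q with
  | some x, some y =>
    have h3 : (1:F) = t * 1 := congrFun ht 3
    have h5 : x = t * y := congrFun ht 5
    have ht1 : t = 1 := by linear_combination -h3
    rw [ht1, one_mul] at h5
    rw [h5]
  | some x, none =>
    have h3 : (1:F) = t * 0 := congrFun ht 3
    simp at h3
  | none, some y =>
    have h3 : (0:F) = t * 1 := congrFun ht 3
    have h5 : (1:F) = t * y := congrFun ht 5
    rw [mul_one] at h3
    rw [← h3, zero_mul] at h5
    exact absurd h5 one_ne_zero
  | none, none => rfl

lemma prop_aux (h2 : (2:F) = 0) (b c : Fin 3 → F) (hb0 : b 0 = 0)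
    (e1 : b 0 * c 1 + b 1 * c 0 = 0) (e2 : b 0 * c 2 + b 2 * c 0 = 0)
    (e4 : b 1 * c 2 + b 2 * c 1 = 0) :
    (∃ t : F, c = t • b) ∨ (∃ t : F, b = t • c) := by
  rw [hb0] at e1 e2
  simp only [zero_mul, zero_add] at e1 e2
  by_cases hc0 : c 0 = 0
  · by_cases hb1 : b 1 = 0
    · by_cases hb2 : b 2 = 0
      · right
        refine ⟨0, ?_⟩
        funext i
        fin_cases i
        · show b 0 = (0:F) * c 0; rw [hb0]; ring
        · show b 1 = (0:F) * c 1; rw [hb1]; ring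
        · show b 2 = (0:F) * c 2; rw [hb2]; ring
      · have hc1 : c 1 = 0 := by
          have hz : b 2 * c 1 = 0 := by linear_combination e4 - c 2 * hb1
          exact (mul_eq_zero.mp hz).resolve_left hb2
        left
        refine ⟨c 2 / b 2, ?_⟩
        funext i
        fin_cases i
        · show c 0 = c 2 / b 2 * b 0; rw [hc0, hb0]; ring
        · show c 1 = c 2 / b 2 * b 1; rw [hc1, hb1]; ring
        · show c 2 = c 2 / b 2 * b 2; field_simp
    · left
      refine ⟨c 1 / b 1, ?_⟩
      funext i
      fin_cases i
      · show c 0 = c 1 / b 1 * b 0; rw [hc0, hb0]; ring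
      · show c 1 = c 1 / b 1 * b 1; field_simp
      · show c 2 = c 1 / b 1 * b 2
        field_simp
        first
        | linear_combination e4 - (c 1 * b 2) * h2
        | linear_combination -e4 + (c 1 * b 2) * h2
        | linear_combination e4 + (c 1 * b 2) * h2
        | linear_combination -e4 - (c 1 * b 2) * h2
  · have hb1 : b 1 = 0 := (mul_eq_zero.mp e1).resolve_right hc0
    have hb2 : b 2 = 0 := (mul_eq_zero.mp e2).resolve_right hc0
    right
    refine ⟨0, ?_⟩
    funext i
    fin_cases i
    · show b 0 = (0:F) * c 0; rw [hb0]; ring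
    · show b 1 = (0:F) * c 1; rw [hb1]; ring
    · show b 2 = (0:F) * c 2; rw [hb2]; ring

lemma prop_or (h2 : (2:F) = 0) (b c : Fin 3 → F) (e0 : b 0 * c 0 = 0)
    (e1 : b 0 * c 1 + b 1 * c 0 = 0) (e2 : b 0 * c 2 + b 2 * c 0 = 0)
    (e4 : b 1 * c 2 + b 2 * c 1 = 0) :
    (∃ t : F, c = t • b) ∨ (∃ t : F, b = t • c) := by
  rcases mul_eq_zero.mp e0 with hb0 | hc0
  · exact prop_aux h2 b c hb0 e1 e2 e4
  · exact (prop_aux h2 c b hc0 (by linear_combination e1) (by linear_combination e2)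
      (by linear_combination e4)).symm

lemma RP_set (h2 : (2:F) = 0) :
    {P : Submodule F (Fin 6 → F) |
      ∃ a : Fin 6 → F, a ≠ 0 ∧ a ∈ Wc F ∧ IsRealPair a ∧ P = Submodule.span F {a}}
      = Set.range (fun p => Submodule.span F {rRP F p}) := by
  ext P
  simp only [Set.mem_setOf_eq, Set.mem_range]
  constructor
  · rintro ⟨a, hne, ⟨h0, h4⟩, ⟨b, c, hn1, hn2, ha⟩, rfl⟩
    have e0 : a 0 = b 0 * c 0 := congrFun ha 0
    have e1 : a 1 = b 0 * c 1 + b 1 * c 0 := congrFun ha 1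
    have e2 : a 2 = b 0 * c 2 + b 2 * c 0 := congrFun ha 2
    have e4 : a 4 = b 1 * c 2 + b 2 * c 1 := congrFun ha 4
    have hd : disc a = 0 := by rw [ha]; exact disc_mulLin b c
    simp only [disc] at hd
    have key : a 3 * a 2 ^ 2 + a 5 * a 1 ^ 2 = 0 := by
      linear_combination -hd + (4 * a 3 * a 5 - a 4 ^ 2) * h0 + (a 1 * a 2) * h4
    have hA : a 1 ≠ 0 ∨ a 2 ≠ 0 := by
      by_contra hcon
      push_neg at hcon
      obtain ⟨hA1, hA2⟩ := hcon
      rcases prop_or h2 b c (by rw [← e0]; exact h0) (by rw [← e1]; exact hA1)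
        (by rw [← e2]; exact hA2) (by rw [← e4]; exact h4) with hp | hp
      · exact hn1 hp
      · exact hn2 hp
    by_cases h1 : a 1 = 0
    · have h2' : a 2 ≠ 0 := hA.resolve_left (by simp [h1])
      have h3 : a 3 = 0 := by
        rw [h1] at key
        simp only [ne_eq, OfNat.ofNat_ne_zero, not_false_eq_true, zero_pow, mul_zero,
          add_zero] at key
        rcases mul_eq_zero.mp key with h | h
        · exact h
        · exact absurd (pow_eq_zero_iff (by norm_num) |>.mp h) h2'
      refine ⟨Sum.inr (a 5 / a 2), ?_⟩
      have heq : a = a 2 • rRP F (Sum.inr (a 5 / a 2)) := by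
        funext i
        fin_cases i
        · show a 0 = a 2 * 0; rw [h0]; ring
        · show a 1 = a 2 * 0; rw [h1]; ring
        · show a 2 = a 2 * 1; ring
        · show a 3 = a 2 * 0; rw [h3]; ring
        · show a 4 = a 2 * 0; rw [h4]; ring
        · show a 5 = a 2 * (a 5 / a 2); field_simp
      exact (span_eq_span h2' heq).symm
    · refine ⟨Sum.inl (a 2 / a 1, a 3 / a 1), ?_⟩
      have heq : a = a 1 • rRP F (Sum.inl (a 2 / a 1, a 3 / a 1)) := by
        funext i
        fin_cases i
        · show a 0 = a 1 * 0; rw [h0]; ring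
        · show a 1 = a 1 * 1; ring
        · show a 2 = a 1 * (a 2 / a 1); field_simp
        · show a 3 = a 1 * (a 3 / a 1); field_simp
        · show a 4 = a 1 * 0; rw [h4]; ring
        · show a 5 = a 1 * ((a 2 / a 1) ^ 2 * (a 3 / a 1))
          field_simp
          first
          | linear_combination -(a 1) * key + (a 5 * a 1 ^ 3) * h2
          | linear_combination a 1 * key - (a 5 * a 1 ^ 3) * h2
          | linear_combination -key + (a 5 * a 1 ^ 2) * h2
          | linear_combination key - (a 5 * a 1 ^ 2) * h2
          | linear_combination -(a 1) * key - (a 5 * a 1 ^ 3) * h2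
          | linear_combination a 1 * key + (a 5 * a 1 ^ 3) * h2
      exact (span_eq_span h1 heq).symm
  · rintro ⟨p, rfl⟩
    match p with
    | Sum.inl (x, y) =>
      refine ⟨![0,1,x,y,0,x^2*y], ?_, ⟨rfl, rfl⟩, ⟨![0,1,x], ![1,y,x*y], ?_, ?_, ?_⟩, rfl⟩
      · intro h; exact one_ne_zero (α := F) (by simpa using congrFun h 1)
      · rintro ⟨t, h⟩
        have := congrFun h 0
        simp at this
      · rintro ⟨t, h⟩
        have hh0 : (0:F) = t * 1 := congrFun h 0
        have hh1 : (1:F) = t * y := congrFun h 1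
        rw [mul_one] at hh0
        rw [← hh0, zero_mul] at hh1
        exact absurd hh1 one_ne_zero
      · funext i
        fin_cases i
        · show (0:F) = 0 * 1; ring
        · show (1:F) = 0 * y + 1 * 1; ring
        · show x = 0 * (x * y) + x * 1; ring
        · show y = 1 * y; ring
        · show (0:F) = 1 * (x * y) + x * y; linear_combination (-(x * y)) * h2
        · show x ^ 2 * y = x * (x * y); ring
    | Sum.inr z =>
      refine ⟨![0,0,1,0,0,z], ?_, ⟨rfl, rfl⟩, ⟨![0,0,1], ![1,0,z], ?_, ?_, ?_⟩, rfl⟩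
      · intro h; exact one_ne_zero (α := F) (by simpa using congrFun h 2)
      · rintro ⟨t, h⟩
        have := congrFun h 0
        simp at this
      · rintro ⟨t, h⟩
        have hh0 : (0:F) = t * 1 := congrFun h 0
        have hh2 : (1:F) = t * z := congrFun h 2
        rw [mul_one] at hh0
        rw [← hh0, zero_mul] at hh2
        exact absurd hh2 one_ne_zero
      · funext i
        fin_cases i
        · show (0:F) = 0 * 1; ring
        · show (0:F) = 0 * 0 + 0 * 1; ring
        · show (1:F) = 0 * z + 1 * 1; ring
        · show (0:F) = 0 * 0; ring
        · show (0:F) = 0 * z + 1 * 0; ring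
        · show z = 1 * z; ring

lemma RP_inj : Function.Injective (fun p => Submodule.span F {rRP F p}) := by
  intro p q h
  obtain ⟨t, ht⟩ := exists_smul_of_span_eq h
  match p, q with
  | Sum.inl (x, y), Sum.inl (x', y') =>
    have h1 : (1:F) = t * 1 := congrFun ht 1
    have hx : x = t * x' := congrFun ht 2
    have hy : y = t * y' := congrFun ht 3
    have ht1 : t = 1 := by linear_combination -h1
    rw [ht1, one_mul] at hx hy
    rw [hx, hy]
  | Sum.inl (x, y), Sum.inr z' =>
    have h1 : (1:F) = t * 0 := congrFun ht 1
    simp at h1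
  | Sum.inr z, Sum.inl (x', y') =>
    have h1 : (0:F) = t * 1 := congrFun ht 1
    have h2' : (1:F) = t * x' := congrFun ht 2
    rw [mul_one] at h1
    rw [← h1, zero_mul] at h2'
    exact absurd h2' one_ne_zero
  | Sum.inr z, Sum.inr z' =>
    have h1 : (1:F) = t * 1 := congrFun ht 2
    have hz : z = t * z' := congrFun ht 5
    have ht1 : t = 1 := by linear_combination -h1
    rw [ht1, one_mul] at hz
    rw [hz]

lemma IP_set (h2 : (2:F) = 0) :
    {P : Submodule F (Fin 6 → F) |
      ∃ a : Fin 6 → F, a ≠ 0 ∧ a ∈ Wc F ∧ IsImagPair a ∧ P = Submodule.span F {a}}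
      = (∅ : Set (Submodule F (Fin 6 → F))) := by
  rw [Set.eq_empty_iff_forall_notMem]
  rintro P ⟨a, hne, ⟨h0, h4⟩, ⟨hd, hnp⟩, rfl⟩
  apply hnp
  simp only [disc] at hd
  have key : a 3 * a 2 ^ 2 + a 5 * a 1 ^ 2 = 0 := by
    linear_combination -hd + (4 * a 3 * a 5 - a 4 ^ 2) * h0 + (a 1 * a 2) * h4
  by_cases h2' : a 2 = 0
  · by_cases h1 : a 1 = 0
    · obtain ⟨s, hs⟩ := sq_surj h2 (a 3)
      obtain ⟨r, hr⟩ := sq_surj h2 (a 5)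
      refine ⟨![0,s,r], ![0,s,r], ?_⟩
      funext i
      fin_cases i
      · show a 0 = 0 * 0; rw [h0]; ring
      · show a 1 = 0 * s + s * 0; rw [h1]; ring
      · show a 2 = 0 * r + r * 0; rw [h2']; ring
      · show a 3 = s * s; rw [hs]
      · show a 4 = s * r + r * s; linear_combination h4 - (s * r) * h2
      · show a 5 = r * r; rw [hr]
    · have h5 : a 5 = 0 := by
        have k : a 5 * a 1 ^ 2 = 0 := by linear_combination key - (a 3 * a 2) * h2'
        exact (mul_eq_zero.mp k).resolve_right (pow_ne_zero 2 h1)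
      refine ⟨![0, a 1, a 2], ![1, a 3 / a 1, 0], ?_⟩
      funext i
      fin_cases i
      · show a 0 = 0 * 1; rw [h0]; ring
      · show a 1 = 0 * (a 3 / a 1) + a 1 * 1; ring
      · show a 2 = 0 * 0 + a 2 * 1; ring
      · show a 3 = a 1 * (a 3 / a 1); field_simp
      · show a 4 = a 1 * 0 + a 2 * (a 3 / a 1); rw [h4, h2']; ring
      · show a 5 = a 2 * 0; rw [h5]; ring
  · refine ⟨![0, a 1, a 2], ![1, a 5 * a 1 / a 2 ^ 2, a 5 / a 2], ?_⟩
    funext i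
    fin_cases i
    · show a 0 = 0 * 1; rw [h0]; ring
    · show a 1 = 0 * (a 5 * a 1 / a 2 ^ 2) + a 1 * 1; ring
    · show a 2 = 0 * (a 5 / a 2) + a 2 * 1; ring
    · show a 3 = a 1 * (a 5 * a 1 / a 2 ^ 2)
      field_simp
      first
      | linear_combination key - (a 5 * a 1 ^ 2) * h2
      | linear_combination -key + (a 5 * a 1 ^ 2) * h2
      | linear_combination key + (a 5 * a 1 ^ 2) * h2
      | linear_combination -key - (a 5 * a 1 ^ 2) * h2
    · show a 4 = a 1 * (a 5 / a 2) + a 2 * (a 5 * a 1 / a 2 ^ 2)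
      rw [h4]
      field_simp
      first
      | linear_combination (a 5 * a 1 * a 2) * h2
      | linear_combination (-(a 5 * a 1 * a 2)) * h2
      | linear_combination (a 5 * a 1 * a 2 ^ 2) * h2
      | linear_combination (-(a 5 * a 1 * a 2 ^ 2)) * h2
      | linear_combination (-(a 5 * a 1)) * h2
    · show a 5 = a 2 * (a 5 / a 2); field_simp

lemma NS_set (h2 : (2:F) = 0) :
    {P : Submodule F (Fin 6 → F) |
      ∃ a : Fin 6 → F, a ≠ 0 ∧ a ∈ Wc F ∧ IsNonsingular a ∧ P = Submodule.span F {a}}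
      = Set.range (fun p => Submodule.span F {rNS F p}) := by
  ext P
  simp only [Set.mem_setOf_eq, Set.mem_range]
  constructor
  · rintro ⟨a, hne, ⟨h0, h4⟩, hd, rfl⟩
    have key : a 3 * a 2 ^ 2 + a 5 * a 1 ^ 2 ≠ 0 := by
      intro h
      apply hd
      simp only [IsNonsingular, disc] at *
      linear_combination -h + (4 * a 3 * a 5 - a 4 ^ 2) * h0 + (a 1 * a 2) * h4
    by_cases h1 : a 1 = 0
    · have h2' : a 2 ≠ 0 ∧ a 3 ≠ 0 := by
        constructor <;> intro h <;> apply key <;> rw [h1, h] <;> ring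
      obtain ⟨h2', h3⟩ := h2'
      refine ⟨Sum.inr (Units.mk0 (a 3 / a 2) (div_ne_zero h3 h2'), a 5 / a 2), ?_⟩
      have heq : a = a 2 • rNS F (Sum.inr (Units.mk0 (a 3 / a 2) (div_ne_zero h3 h2'), a 5 / a 2)) := by
        funext i
        fin_cases i
        · show a 0 = a 2 * 0; rw [h0]; ring
        · show a 1 = a 2 * 0; rw [h1]; ring
        · show a 2 = a 2 * 1; ring
        · show a 3 = a 2 * (a 3 / a 2); field_simp
        · show a 4 = a 2 * 0; rw [h4]; ring
        · show a 5 = a 2 * (a 5 / a 2); field_simp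
      exact (span_eq_span h2' heq).symm
    · set u0 : F := (a 5 * a 1 ^ 2 + a 2 ^ 2 * a 3) / a 1 ^ 3 with hu0
      have hnum : a 5 * a 1 ^ 2 + a 2 ^ 2 * a 3 ≠ 0 := by
        intro h; exact key (by linear_combination h)
      have hu : u0 ≠ 0 := div_ne_zero hnum (pow_ne_zero 3 h1)
      refine ⟨Sum.inl (a 2 / a 1, a 3 / a 1, Units.mk0 u0 hu), ?_⟩
      have heq : a = a 1 • rNS F (Sum.inl (a 2 / a 1, a 3 / a 1, Units.mk0 u0 hu)) := by
        funext i
        fin_cases i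
        · show a 0 = a 1 * 0; rw [h0]; ring
        · show a 1 = a 1 * 1; ring
        · show a 2 = a 1 * (a 2 / a 1); field_simp
        · show a 3 = a 1 * (a 3 / a 1); field_simp
        · show a 4 = a 1 * 0; rw [h4]; ring
        · show a 5 = a 1 * ((a 2 / a 1) ^ 2 * (a 3 / a 1) + u0)
          rw [hu0]
          field_simp
          first
          | linear_combination (a 1 ^ 4 * a 2 ^ 2 * a 3) * h2
          | linear_combination (-(a 1 ^ 4 * a 2 ^ 2 * a 3)) * h2
          | linear_combination (a 1 ^ 3 * a 2 ^ 2 * a 3) * h2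
          | linear_combination (-(a 1 ^ 3 * a 2 ^ 2 * a 3)) * h2
          | linear_combination (a 1 ^ 2 * a 2 ^ 2 * a 3) * h2
          | linear_combination (-(a 1 ^ 2 * a 2 ^ 2 * a 3)) * h2
          | linear_combination (a 2 ^ 2 * a 3) * h2
          | linear_combination (-(a 2 ^ 2 * a 3)) * h2
      exact (span_eq_span h1 heq).symm
  · rintro ⟨p, rfl⟩
    match p with
    | Sum.inl (x, y, u) =>
      refine ⟨![0,1,x,y,0,x^2*y + (u:F)], ?_, ⟨rfl, rfl⟩, ?_, rfl⟩
      · intro h; exact one_ne_zero (α := F) (by simpa using congrFun h 1)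
      · simp only [IsNonsingular, disc, c6_0, c6_1, c6_2, c6_3, c6_4, c6_5]
        intro h
        exact u.ne_zero (by linear_combination -h - (x^2*y) * h2)
    | Sum.inr (u, z) =>
      refine ⟨![0,0,1,(u:F),0,z], ?_, ⟨rfl, rfl⟩, ?_, rfl⟩
      · intro h; exact one_ne_zero (α := F) (by simpa using congrFun h 2)
      · simp only [IsNonsingular, disc, c6_0, c6_1, c6_2, c6_3, c6_4, c6_5]
        intro h
        exact u.ne_zero (by linear_combination -h)

lemma NS_inj : Function.Injective (fun p => Submodule.span F {rNS F p}) := by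
  intro p q h
  obtain ⟨t, ht⟩ := exists_smul_of_span_eq h
  match p, q with
  | Sum.inl (x, y, u), Sum.inl (x', y', u') =>
    have h1 : (1:F) = t * 1 := congrFun ht 1
    have hx : x = t * x' := congrFun ht 2
    have hy : y = t * y' := congrFun ht 3
    have h5 : x^2*y + (u:F) = t * (x'^2*y' + (u':F)) := congrFun ht 5
    have ht1 : t = 1 := by linear_combination -h1
    rw [ht1, one_mul] at hx hy h5
    subst hx; subst hy
    have : (u:F) = (u':F) := by linear_combination h5
    have := Units.ext this
    rw [this]
  | Sum.inl (x, y, u), Sum.inr (u', z') =>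
    have h1 : (1:F) = t * 0 := congrFun ht 1
    simp at h1
  | Sum.inr (u, z), Sum.inl (x', y', u') =>
    have h1 : (0:F) = t * 1 := congrFun ht 1
    have h2' : (1:F) = t * x' := congrFun ht 2
    rw [mul_one] at h1
    rw [← h1, zero_mul] at h2'
    exact absurd h2' one_ne_zero
  | Sum.inr (u, z), Sum.inr (u', z') =>
    have h1 : (1:F) = t * 1 := congrFun ht 2
    have hu : (u:F) = t * (u':F) := congrFun ht 3
    have hz : z = t * z' := congrFun ht 5
    have ht1 : t = 1 := by linear_combination -h1
    rw [ht1, one_mul] at hu hz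
    rw [Units.ext hu, hz]

end Sets

/-- conic counts of the web `(X0X1, X0X2, X1^2, X2^2)`
(line-orbit `o_{8,3}`), `q` even. -/
theorem web_o83_conic_counts (F : Type) [Field F] [Fintype F] (q : ℕ)
    (hq : Fintype.card F = q) (heven : Even q) (W : Submodule F (Fin 6 → F))
    (hW : W = Submodule.span F ({![0, 1, 0, 0, 0, 0], ![0, 0, 1, 0, 0, 0],
      ![0, 0, 0, 1, 0, 0], ![0, 0, 0, 0, 0, 1]} : Set (Fin 6 → F))) :
    numConics W IsDoubleLine = q + 1 ∧
    numConics W IsRealPair = q ^ 2 + q ∧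
    numConics W IsImagPair = 0 ∧
    numConics W IsNonsingular = q ^ 3 - q := by
  have h2 : (2:F) = 0 := two_eq_zero (hq ▸ heven)
  have hWc : W = Wc F := by rw [hW, span_eq_Wc]
  subst hWc
  have hcardF : Nat.card F = q := by rw [Nat.card_eq_fintype_card, hq]
  have hcardU : Nat.card Fˣ = q - 1 := by rw [Nat.card_units, hcardF]
  have hq1 : 1 ≤ q := hq ▸ Fintype.card_pos
  refine ⟨?_, ?_, ?_, ?_⟩
  · rw [numConics, ncard_eq (rDL F) _ (DL_set h2) DL_inj]
    rw [Nat.card_eq_fintype_card, Fintype.card_option, hq]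
  · rw [numConics, ncard_eq (rRP F) _ (RP_set h2) RP_inj]
    rw [Nat.card_sum, Nat.card_prod, hcardF]
    ring
  · rw [numConics, IP_set h2, Set.ncard_empty]
  · rw [numConics, ncard_eq (rNS F) _ (NS_set h2) NS_inj]
    rw [Nat.card_sum, Nat.card_prod, Nat.card_prod, Nat.card_prod, hcardF, hcardU]
    obtain ⟨m, rfl⟩ : ∃ m, q = m + 1 := ⟨q - 1, by omega⟩
    simp only [Nat.add_sub_cancel]
    symm
    apply Nat.sub_eq_of_eq_add
    ring

end Conics
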